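/- arXiv:2109.10872 — 3 statements merged into one kernel-verified Lean document; each statement's English description precedes it below -/
import Mathlib

section
/- Let Q = Σ_{i=1}^N ρᵢ rᵢrᵢ^T + ρ_{N+1} g g^T with ρᵢ > 0 for all i ∈ {1,…,N+1}, where rᵢ, g ∈ ℝ^3. If there exist two indices i ≠ j in {1,…,N} such that rᵢ and rⱼ are linearly independent (non-collinear), then the matrix Q̄ := tr(Q)I₃ − Q is positive definite. -/
open Matrix

noncomputable section

/-- Skew-symmetric matrix `x^×` associated to `x ∈ ℝ³`. -/
def skew (x : Fin 3 → ℝ) : Matrix (Fin 3) (Fin 3) ℝ :=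
  !![0, -x 2, x 1; x 2, 0, -x 0; -x 1, x 0, 0]

/-- `ψ(A) = vec((A - Aᵀ)/2)`, the vector of the anti-symmetric part of `A`. -/
def psi (A : Matrix (Fin 3) (Fin 3) ℝ) : Fin 3 → ℝ :=
  ![(A 2 1 - A 1 2) / 2, (A 0 2 - A 2 0) / 2, (A 1 0 - A 0 1) / 2]

lemma vecMulVec_mulVec' (v w x : Fin 3 → ℝ) :
    Matrix.vecMulVec v w *ᵥ x = (w ⬝ᵥ x) • v := by
  funext k
  simp only [Matrix.vecMulVec_apply, Matrix.mulVec, dotProduct, Pi.smul_apply,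
    smul_eq_mul, Finset.sum_mul]
  exact Finset.sum_congr rfl fun _ _ => by ring

lemma trace_vecMulVec' (v : Fin 3 → ℝ) :
    (Matrix.vecMulVec v v).trace = v ⬝ᵥ v := by
  simp [Matrix.trace, Matrix.vecMulVec_apply, dotProduct, Matrix.diag]

lemma sum_mulVec' {ι : Type*} (s : Finset ι) (A : ι → Matrix (Fin 3) (Fin 3) ℝ)
    (x : Fin 3 → ℝ) : (∑ k ∈ s, A k) *ᵥ x = ∑ k ∈ s, A k *ᵥ x := by
  funext m
  simp only [Matrix.mulVec, dotProduct, Finset.sum_apply, Matrix.sum_apply,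
    Finset.sum_mul]
  exact Finset.sum_comm

lemma dotProduct_sum' {ι : Type*} (s : Finset ι) (x : Fin 3 → ℝ) (f : ι → Fin 3 → ℝ) :
    x ⬝ᵥ (∑ k ∈ s, f k) = ∑ k ∈ s, x ⬝ᵥ f k := by
  simp only [dotProduct, Finset.sum_apply, Finset.mul_sum]
  exact Finset.sum_comm

lemma cs_ineq (v x : Fin 3 → ℝ) : (v ⬝ᵥ x) ^ 2 ≤ (v ⬝ᵥ v) * (x ⬝ᵥ x) := by
  have := Finset.sum_mul_sq_le_sq_mul_sq Finset.univ v x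
  simpa [dotProduct, sq] using this

lemma dep_of_cs_eq (v x : Fin 3 → ℝ) (hx : x ≠ 0)
    (h : (v ⬝ᵥ x) ^ 2 = (v ⬝ᵥ v) * (x ⬝ᵥ x)) : ∃ a : ℝ, v = a • x := by
  have hd : x ⬝ᵥ x ≠ 0 := fun h0 => hx (dotProduct_self_eq_zero.mp h0)
  have hw : ((x ⬝ᵥ x) • v - (v ⬝ᵥ x) • x) ⬝ᵥ ((x ⬝ᵥ x) • v - (v ⬝ᵥ x) • x) = 0 := by
    simp only [sub_dotProduct, dotProduct_sub, smul_dotProduct,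
      dotProduct_smul, smul_eq_mul, dotProduct_comm x v]
    linear_combination (-(x ⬝ᵥ x)) * h
  have h2 : (x ⬝ᵥ x) • v = (v ⬝ᵥ x) • x :=
    sub_eq_zero.mp (dotProduct_self_eq_zero.mp hw)
  refine ⟨(v ⬝ᵥ x) / (x ⬝ᵥ x), ?_⟩
  rw [div_eq_inv_mul, ← smul_smul, ← h2, smul_smul, inv_mul_cancel₀ hd, one_smul]

/-- If two of the inertial vectors are non-collinear, then `tr(Q)I₃ − Q` is
positive definite. -/
theorem stmt3 (N : ℕ) (ρ : Fin N → ℝ) (ρg : ℝ) (r : Fin N → Fin 3 → ℝ) (g : Fin 3 → ℝ)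
    (hρ : ∀ i, 0 < ρ i) (hρg : 0 < ρg)
    (Q : Matrix (Fin 3) (Fin 3) ℝ)
    (hQ : Q = ∑ i, ρ i • Matrix.vecMulVec (r i) (r i) + ρg • Matrix.vecMulVec g g)
    (i j : Fin N) (hij : i ≠ j)
    (hindep : LinearIndependent ℝ ![r i, r j]) :
    (Q.trace • (1 : Matrix (Fin 3) (Fin 3) ℝ) - Q).PosDef := by
  subst hQ
  set Q : Matrix (Fin 3) (Fin 3) ℝ :=
    ∑ i, ρ i • Matrix.vecMulVec (r i) (r i) + ρg • Matrix.vecMulVec g g with hQ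
  have hherm : Q.IsHermitian := by
    apply Matrix.IsHermitian.ext
    intro a b
    simp only [hQ, star_trivial, Matrix.add_apply, Matrix.sum_apply, Matrix.smul_apply,
      Matrix.vecMulVec_apply, smul_eq_mul]
    congr 1
    · exact Finset.sum_congr rfl fun k _ => by ring
    · ring
  have hone : (Q.trace • (1 : Matrix (Fin 3) (Fin 3) ℝ)).IsHermitian := by
    apply Matrix.IsHermitian.ext
    intro a b
    simp [Matrix.smul_apply, Matrix.one_apply, eq_comm]
  rw [Matrix.posDef_iff_dotProduct_mulVec]
  constructor
  · exact hone.sub hherm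
  intro x hx
  have hstar : star x = x := by simp
  rw [hstar]
  -- compute the quadratic form
  have htr : Q.trace = (∑ k, ρ k * (r k ⬝ᵥ r k)) + ρg * (g ⬝ᵥ g) := by
    simp [hQ, Matrix.trace_sum, Matrix.trace_smul, trace_vecMulVec', smul_eq_mul]
  have hmv : x ⬝ᵥ (Q *ᵥ x) = (∑ k, ρ k * (r k ⬝ᵥ x) ^ 2) + ρg * (g ⬝ᵥ x) ^ 2 := by
    rw [hQ, Matrix.add_mulVec, dotProduct_add]
    congr 1
    · rw [sum_mulVec', dotProduct_sum']
      refine Finset.sum_congr rfl fun k _ => ?_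
      rw [Matrix.smul_mulVec, dotProduct_smul, vecMulVec_mulVec',
        dotProduct_smul, smul_eq_mul, smul_eq_mul, dotProduct_comm]
      ring
    · rw [Matrix.smul_mulVec, dotProduct_smul, vecMulVec_mulVec',
        dotProduct_smul, smul_eq_mul, smul_eq_mul, dotProduct_comm]
      ring
  have hquad : x ⬝ᵥ ((Q.trace • (1 : Matrix (Fin 3) (Fin 3) ℝ) - Q) *ᵥ x)
      = (∑ k, ρ k * ((r k ⬝ᵥ r k) * (x ⬝ᵥ x) - (r k ⬝ᵥ x) ^ 2))
        + ρg * ((g ⬝ᵥ g) * (x ⬝ᵥ x) - (g ⬝ᵥ x) ^ 2) := by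
    rw [Matrix.sub_mulVec, dotProduct_sub, Matrix.smul_mulVec,
      Matrix.one_mulVec, dotProduct_smul, hmv, htr, smul_eq_mul]
    rw [add_mul, Finset.sum_mul]
    simp only [mul_sub]
    rw [Finset.sum_sub_distrib]
    have : ∀ k : Fin N, ρ k * (r k ⬝ᵥ r k) * (x ⬝ᵥ x) = ρ k * ((r k ⬝ᵥ r k) * (x ⬝ᵥ x)) :=
      fun k => by ring
    simp only [this]
    ring
  rw [hquad]
  -- each summand is nonnegative
  have hnonneg : ∀ v : Fin 3 → ℝ, 0 ≤ (v ⬝ᵥ v) * (x ⬝ᵥ x) - (v ⬝ᵥ x) ^ 2 :=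
    fun v => sub_nonneg.mpr (cs_ineq v x)
  -- the terms for i and j cannot both vanish
  have hposij : 0 < ρ i * ((r i ⬝ᵥ r i) * (x ⬝ᵥ x) - (r i ⬝ᵥ x) ^ 2)
      ∨ 0 < ρ j * ((r j ⬝ᵥ r j) * (x ⬝ᵥ x) - (r j ⬝ᵥ x) ^ 2) := by
    by_contra hcon
    push_neg at hcon
    obtain ⟨h1, h2⟩ := hcon
    have e1 : (r i ⬝ᵥ x) ^ 2 = (r i ⬝ᵥ r i) * (x ⬝ᵥ x) := by
      have := hnonneg (r i)
      nlinarith [hρ i]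
    have e2 : (r j ⬝ᵥ x) ^ 2 = (r j ⬝ᵥ r j) * (x ⬝ᵥ x) := by
      have := hnonneg (r j)
      nlinarith [hρ j]
    obtain ⟨a, ha⟩ := dep_of_cs_eq (r i) x hx e1
    obtain ⟨b, hb⟩ := dep_of_cs_eq (r j) x hx e2
    rcases eq_or_ne a 0 with rfl | ha0
    · have : (1 : ℝ) = 0 ∧ (0 : ℝ) = 0 := LinearIndependent.pair_iff.mp hindep 1 0
        (by simp [ha])
      exact one_ne_zero this.1
    · have hcomb : b • r i + (-a) • r j = 0 := by
        rw [ha, hb, smul_smul, smul_smul]; module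
      have := LinearIndependent.pair_iff.mp hindep b (-a) hcomb
      exact ha0 (neg_eq_zero.mp this.2)
  have hsum : 0 < ∑ k, ρ k * ((r k ⬝ᵥ r k) * (x ⬝ᵥ x) - (r k ⬝ᵥ x) ^ 2) := by
    apply Finset.sum_pos'
    · intro k _
      exact mul_nonneg (hρ k).le (hnonneg (r k))
    · rcases hposij with h | h
      · exact ⟨i, Finset.mem_univ i, h⟩
      · exact ⟨j, Finset.mem_univ j, h⟩
  have hg : 0 ≤ ρg * ((g ⬝ᵥ g) * (x ⬝ᵥ x) - (g ⬝ᵥ x) ^ 2) :=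
    mul_nonneg hρg.le (hnonneg g)
  linarith
end
end

section
/- For every R ∈ SO(3), ‖ψ(R)‖² = 4(1 − |R|_I²)|R|_I², where |R|_I² := tr(I₃ − R)/4; in particular ‖ψ(R)‖² ≤ 1. -/
open Matrix

noncomputable section

/-- For `R ∈ SO(3)`, `‖ψ(R)‖² = 4(1 − |R|_I²)|R|_I²` where `|R|_I² = tr(I₃ − R)/4`;
in particular `‖ψ(R)‖² ≤ 1`. -/
theorem stmt5 (R : Matrix (Fin 3) (Fin 3) ℝ) (hR : Rᵀ * R = 1) (hdet : R.det = 1) :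
    psi R ⬝ᵥ psi R
      = 4 * (1 - Matrix.trace (1 - R) / 4) * (Matrix.trace (1 - R) / 4) ∧
    psi R ⬝ᵥ psi R ≤ 1 := by
  have h1 : R * R.adjugate = 1 := by
    rw [Matrix.mul_adjugate, hdet, one_smul]
  have hadj : R.adjugate = Rᵀ := by
    calc R.adjugate = (Rᵀ * R) * R.adjugate := by rw [hR, one_mul]
    _ = Rᵀ * (R * R.adjugate) := Matrix.mul_assoc _ _ _
    _ = Rᵀ := by rw [h1, mul_one]
  have hA : ∀ i j, R.adjugate i j = R j i := fun i j => by
    rw [hadj]; rfl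
  have hA0 := hA 0 0
  have hA1 := hA 1 1
  have hA2 := hA 2 2
  simp only [Matrix.adjugate_fin_three] at hA0 hA1 hA2
  have hC : ∀ i j, (Rᵀ * R) i j = (1 : Matrix (Fin 3) (Fin 3) ℝ) i j := fun i j => by
    rw [hR]
  have hC0 := hC 0 0
  have hC1 := hC 1 1
  have hC2 := hC 2 2
  simp only [Matrix.mul_apply, Matrix.transpose_apply, Fin.sum_univ_three,
    Matrix.one_apply_eq] at hC0 hC1 hC2
  have key : psi R ⬝ᵥ psi R
      = 4 * (1 - Matrix.trace (1 - R) / 4) * (Matrix.trace (1 - R) / 4) := by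
    simp only [psi, dotProduct, Fin.sum_univ_three, Matrix.trace,
      Matrix.diag, Matrix.sub_apply, Matrix.one_apply_eq, Fin.sum_univ_three,
      Matrix.cons_val_zero, Matrix.cons_val_one, Matrix.head_cons,
      Matrix.cons_val_two, Matrix.tail_cons]
    simp only [Matrix.of_apply, Matrix.cons_val', Matrix.cons_val_zero,
      Matrix.cons_val_one, Matrix.head_cons, Matrix.empty_val',
      Matrix.cons_val_fin_one, Matrix.head_fin_const, Matrix.cons_val_two,
      Matrix.tail_cons] at hA0 hA1 hA2
    linear_combination (hC0 + hC1 + hC2) / 4 + (hA0 + hA1 + hA2) / 2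
  refine ⟨key, ?_⟩
  rw [key]
  nlinarith [sq_nonneg (Matrix.trace (1 - R) - 2)]
end
end

section
/- Let Q̄ be a symmetric positive definite 3×3 matrix. The set of R ∈ SO(3) satisfying ψ(Q̄ R) = 0 (equivalently Q̄R = R^T Q̄) equals {I₃} ∪ {R_a(π, v) : v a unit eigenvector of Q̄}, where R_a(θ,u) = I₃ + sin θ · u^× + (1 − cos θ)(u^×)² is the angle-axis rotation. -/
open Matrix

noncomputable section

/-- Angle-axis rotation `R_a(θ,u) = I₃ + sin θ • u^× + (1 − cos θ)(u^×)²`. -/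
def Ra (θ : ℝ) (u : Fin 3 → ℝ) : Matrix (Fin 3) (Fin 3) ℝ :=
  1 + Real.sin θ • skew u + (1 - Real.cos θ) • (skew u * skew u)

lemma Ra_pi_eq (v : Fin 3 → ℝ) :
    Ra Real.pi v = Matrix.of fun j k =>
      2 * v j * v k
        - (2 * (v 0 * v 0 + v 1 * v 1 + v 2 * v 2) - 1) * (1 : Matrix (Fin 3) (Fin 3) ℝ) j k := by
  ext j k
  fin_cases j <;> fin_cases k <;>
    simp [Ra, skew, Matrix.mul_apply, Fin.sum_univ_three, Real.sin_pi, Real.cos_pi,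
      Matrix.one_apply] <;> ring

lemma Ra_pi_apply (v : Fin 3 → ℝ) (hv : v 0 * v 0 + v 1 * v 1 + v 2 * v 2 = 1) (j k : Fin 3) :
    Ra Real.pi v j k = 2 * v j * v k - (1 : Matrix (Fin 3) (Fin 3) ℝ) j k := by
  rw [Ra_pi_eq]
  simp only [Matrix.of_apply]
  rw [hv]
  ring

lemma rank_one_of_idem {n : Type*} [Fintype n] [DecidableEq n]
    (P : Matrix n n ℝ) (hs : Pᵀ = P) (h2 : P * P = P) (ht : P.trace = 1)
    (i j k : n) : P i i * P j k = P j i * P k i := by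
  have hsym : ∀ a b, P a b = P b a := fun a b => by
    conv_lhs => rw [← hs]
    rfl
  set W : Matrix n n ℝ := Matrix.of fun a b => P i i * P a b - P a i * P b i with hW
  have hPP : ∀ a b, ∑ l, P a l * P l b = P a b := fun a b => by
    have := congrFun (congrFun h2 a) b
    simpa [Matrix.mul_apply] using this
  have hWab : ∀ a b, W a b = P i i * P a b - P a i * P b i := fun a b => rfl
  have h3 : ∀ b, ∑ l, P l i * P l b = P i b := by
    intro b
    calc ∑ l, P l i * P l b = ∑ l, P i l * P l b :=
          Finset.sum_congr rfl fun l _ => by rw [hsym l i]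
      _ = P i b := hPP i b
  have hW2 : ∀ a b, ∑ l, W a l * W l b = P i i * W a b := by
    intro a b
    calc ∑ l, W a l * W l b
        = ∑ l, ((P i i * P i i) * (P a l * P l b) - (P i i * P b i) * (P a l * P l i)
            - (P a i * P i i) * (P l i * P l b) + (P a i * P b i) * (P l i * P l i)) := by
          refine Finset.sum_congr rfl fun l _ => by simp only [hWab]; ring
      _ = (P i i * P i i) * P a b - (P i i * P b i) * P a i - (P a i * P i i) * P i b
            + (P a i * P b i) * P i i := by
          simp [Finset.sum_add_distrib, Finset.sum_sub_distrib, ← Finset.mul_sum,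
            hPP a b, hPP a i, h3 b, h3 i]
      _ = P i i * W a b := by rw [hWab, hsym i b]; ring
  have htr' : ∑ a, P a a = 1 := by simpa [Matrix.trace, Matrix.diag] using ht
  have htr : ∑ a, W a a = 0 := by
    have e : ∑ a, W a a = P i i * (∑ a, P a a) - ∑ a, P a i * P a i := by
      simp [hWab, Finset.sum_sub_distrib, ← Finset.mul_sum]
    have h4 : ∑ a, P a i * P a i = P i i := by
      calc ∑ a, P a i * P a i = ∑ a, P i a * P a i :=
            Finset.sum_congr rfl fun a _ => by rw [hsym a i]
        _ = P i i := hPP i i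
    rw [e, htr', h4]; ring
  have hsq : ∑ a, ∑ b, W a b * W a b = 0 := by
    have hWsym : ∀ a b, W a b = W b a := fun a b => by
      simp only [hWab]; rw [hsym a b]; ring
    calc ∑ a, ∑ b, W a b * W a b = ∑ a, ∑ b, W a b * W b a :=
          Finset.sum_congr rfl fun a _ => Finset.sum_congr rfl fun b _ => by
            rw [← hWsym a b]
      _ = ∑ a, P i i * W a a := Finset.sum_congr rfl fun a _ => hW2 a a
      _ = P i i * ∑ a, W a a := by rw [Finset.mul_sum]
      _ = 0 := by rw [htr]; ring
  have h5 : ∀ a ∈ Finset.univ, (0:ℝ) ≤ ∑ b, W a b * W a b := fun a _ =>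
    Finset.sum_nonneg fun b _ => mul_self_nonneg _
  have h6 := (Finset.sum_eq_zero_iff_of_nonneg h5).mp hsq j (Finset.mem_univ j)
  have h7 := (Finset.sum_eq_zero_iff_of_nonneg
      (fun b _ => mul_self_nonneg (W j b))).mp h6 k (Finset.mem_univ k)
  have h8 : W j k = 0 := mul_self_eq_zero.mp h7
  have h9 := hWab j k
  rw [h8] at h9
  linarith

set_option maxHeartbeats 2000000 in
lemma symm_orth_class (R : Matrix (Fin 3) (Fin 3) ℝ) (hs : Rᵀ = R) (h2 : R * R = 1)
    (hd : R.det = 1) :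
    R = 1 ∨ ∃ v : Fin 3 → ℝ, v ⬝ᵥ v = 1 ∧
      ∀ j k, R j k = 2 * v j * v k - (1 : Matrix (Fin 3) (Fin 3) ℝ) j k := by
  have hsym : ∀ a b, R a b = R b a := fun a b => by
    conv_lhs => rw [← hs]
    rfl
  have hadj : adjugate R = R := by
    calc adjugate R = adjugate R * (R * R) := by rw [h2, mul_one]
      _ = (adjugate R * R) * R := by rw [mul_assoc]
      _ = (R.det • (1 : Matrix (Fin 3) (Fin 3) ℝ)) * R := by rw [adjugate_mul]
      _ = R := by rw [hd]; simp
  have hadj' := hadj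
  rw [adjugate_fin_three] at hadj'
  have hA0 : R 1 1 * R 2 2 - R 1 2 * R 2 1 = R 0 0 := by
    have := congrFun (congrFun hadj' 0) 0; simp at this; exact this
  have hA1 : R 0 0 * R 2 2 - R 0 2 * R 2 0 = R 1 1 := by
    have := congrFun (congrFun hadj' 1) 1; simp at this; exact this
  have hA2 : R 0 0 * R 1 1 - R 0 1 * R 1 0 = R 2 2 := by
    have := congrFun (congrFun hadj' 2) 2; simp at this; exact this
  have hm : ∀ a b : Fin 3, R a 0 * R 0 b + R a 1 * R 1 b + R a 2 * R 2 b
      = (1 : Matrix (Fin 3) (Fin 3) ℝ) a b := fun a b => by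
    have := congrFun (congrFun h2 a) b
    simpa [Matrix.mul_apply, Fin.sum_univ_three] using this
  have h00 := hm 0 0; have h11 := hm 1 1; have h22 := hm 2 2
  simp [Matrix.one_apply] at h00 h11 h22
  have hs01 := hsym 0 1; have hs02 := hsym 0 2; have hs12 := hsym 1 2
  set t : ℝ := R 0 0 + R 1 1 + R 2 2 with hts
  have htquad : (t - 3) * (t + 1) = 0 := by
    linear_combination h00 + h11 + h22 + 2 * hA0 + 2 * hA1 + 2 * hA2
  clear hadj hadj' hm
  rw [← hs01, ← hs02] at h00
  rw [← hs01, ← hs12] at h11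
  rw [← hs02, ← hs12] at h22
  rcases mul_eq_zero.mp htquad with h3 | hneg1
  · -- t = 3 ⇒ R = 1
    left
    have ht3 : R 0 0 + R 1 1 + R 2 2 = 3 := by rw [← hts]; linarith [h3]
    have u0 : R 0 0 ≤ 1 := by nlinarith [sq_nonneg (R 0 0 - 1), sq_nonneg (R 0 1), sq_nonneg (R 0 2)]
    have u1 : R 1 1 ≤ 1 := by nlinarith [sq_nonneg (R 1 1 - 1), sq_nonneg (R 0 1), sq_nonneg (R 1 2)]
    have u2 : R 2 2 ≤ 1 := by nlinarith [sq_nonneg (R 2 2 - 1), sq_nonneg (R 0 2), sq_nonneg (R 1 2)]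
    have e0 : R 0 0 = 1 := by linarith
    have e1 : R 1 1 = 1 := by linarith
    have e2 : R 2 2 = 1 := by linarith
    have b01 : R 0 1 = 0 := by
      have : R 0 1 * R 0 1 = 0 := by nlinarith [sq_nonneg (R 0 2)]
      exact mul_self_eq_zero.mp this
    have b02 : R 0 2 = 0 := by
      have : R 0 2 * R 0 2 = 0 := by nlinarith [sq_nonneg (R 0 1)]
      exact mul_self_eq_zero.mp this
    have b12 : R 1 2 = 0 := by
      have : R 1 2 * R 1 2 = 0 := by nlinarith [sq_nonneg (R 0 1)]
      exact mul_self_eq_zero.mp this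
    have b10 : R 1 0 = 0 := by rw [← hs01]; exact b01
    have b20 : R 2 0 = 0 := by rw [← hs02]; exact b02
    have b21 : R 2 1 = 0 := by rw [← hs12]; exact b12
    ext a b
    fin_cases a <;> fin_cases b <;>
      simp [Matrix.one_apply, e0, e1, e2, b01, b02, b12, b10, b20, b21]
  · -- t = -1
    right
    have htr : R.trace = -1 := by rw [trace_fin_three]; linarith
    set P : Matrix (Fin 3) (Fin 3) ℝ := (2⁻¹ : ℝ) • (1 + R) with hPdef
    have hPs : Pᵀ = P := by
      rw [hPdef, transpose_smul, transpose_add, transpose_one, hs]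
    have hPP : P * P = P := by
      have e : (1 + R) * (1 + R) = (1 + R) + (1 + R) := by
        rw [add_mul, mul_add, mul_add, h2, one_mul, mul_one, one_mul]; abel
      rw [hPdef, Matrix.smul_mul, Matrix.mul_smul, e, smul_smul]
      module
    have hPt : P.trace = 1 := by
      rw [hPdef, trace_smul, trace_add, trace_one, htr]
      norm_num
    have hPab : ∀ a b, P a b = 2⁻¹ * ((1 : Matrix (Fin 3) (Fin 3) ℝ) a b + R a b) :=
      fun a b => rfl
    have hPdiag : ∀ a, 0 ≤ P a a := by
      intro a
      have := congrFun (congrFun hPP a) a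
      rw [Matrix.mul_apply] at this
      have e : ∀ b, P a b * P b a = P a b * P a b := fun b => by
        have h' : P b a = P a b := by
          conv_lhs => rw [← hPs]
          rfl
        rw [h']
      rw [Finset.sum_congr rfl (fun b _ => e b)] at this
      rw [← this]
      exact Finset.sum_nonneg fun b _ => mul_self_nonneg _
    have hPtr3 : P 0 0 + P 1 1 + P 2 2 = 1 := by
      have := hPt; rwa [trace_fin_three] at this
    obtain ⟨i, hi⟩ : ∃ i : Fin 3, 0 < P i i := by
      by_contra h
      push_neg at h
      have e0 : P 0 0 = 0 := le_antisymm (h 0) (hPdiag 0)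
      have e1 : P 1 1 = 0 := le_antisymm (h 1) (hPdiag 1)
      have e2 : P 2 2 = 0 := le_antisymm (h 2) (hPdiag 2)
      rw [e0, e1, e2] at hPtr3; norm_num at hPtr3
    set s : ℝ := Real.sqrt (P i i) with hsdef
    have hss : s * s = P i i := Real.mul_self_sqrt hi.le
    have hspos : 0 < s := Real.sqrt_pos.mpr hi
    refine ⟨fun j => P j i / s, ?_, ?_⟩
    · have hcol : ∑ j, P j i * P j i = P i i := by
        have e : ∀ j, P j i * P j i = P i j * P j i := fun j => by
          have h' : P j i = P i j := by
            conv_lhs => rw [← hPs]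
            rfl
          rw [h']
        rw [Finset.sum_congr rfl (fun j _ => e j)]
        have := congrFun (congrFun hPP i) i
        rw [Matrix.mul_apply] at this
        exact this
      have e2 : (∑ j, P j i / s * (P j i / s)) = (∑ j, P j i * P j i) / (s * s) := by
        rw [Finset.sum_div]
        exact Finset.sum_congr rfl fun j _ => by ring
      rw [dotProduct, e2, hcol, hss]
      field_simp
    · intro j k
      have hr1 := rank_one_of_idem P hPs hPP hPt i j k
      have hvv : P j i / s * (P k i / s) = P j k := by
        field_simp
        rw [sq, hss]
        linear_combination (-1 : ℝ) * hr1
      have e := hPab j k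
      have e2 : R j k = 2 * P j k - (1 : Matrix (Fin 3) (Fin 3) ℝ) j k := by
        rw [e]; ring
      rw [e2, ← hvv]
      ring

lemma sq_eq_one_aux {n : Type*} [Fintype n] [DecidableEq n]
    (Qb R : Matrix n n ℝ) (hpd : Qb.PosDef)
    (horth : Rᵀ * R = 1) (hcomm : Rᵀ * Qb = Qb * R) : R * R = 1 := by
  have hQps := hpd.posSemidef
  set B := (open scoped MatrixOrder in CFC.sqrt Qb) with hBdef
  have hBB : B * B = Qb := by
    open scoped MatrixOrder in exact CFC.sqrt_mul_sqrt_self Qb hQps.nonneg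
  have hBs : Bᵀ = B := by
    open scoped MatrixOrder in
    have h := (CFC.sqrt_nonneg Qb).posSemidef.1.eq
    rwa [conjTranspose_eq_transpose_of_trivial] at h
  have hdetB : IsUnit B.det := by
    have hq : Qb.det = B.det * B.det := by rw [← hBB, det_mul]
    have : B.det ≠ 0 := by
      intro h
      have := hpd.det_pos
      rw [hq, h, mul_zero] at this
      exact lt_irrefl _ this
    exact isUnit_iff_ne_zero.mpr this
  have hB1 : B * B⁻¹ = 1 := mul_nonsing_inv _ hdetB
  have hB2 : B⁻¹ * B = 1 := nonsing_inv_mul _ hdetB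
  set N := B * R * B⁻¹ with hNdef
  have hcommB : Rᵀ * (B * B) = B * B * R := by rw [hBB]; exact hcomm
  have hNs : Nᵀ = N := by
    have h1 : Nᵀ = B⁻¹ * Rᵀ * B := by
      rw [hNdef, transpose_mul, transpose_mul, transpose_nonsing_inv, hBs]
      rw [mul_assoc]
    rw [h1, hNdef]
    calc B⁻¹ * Rᵀ * B = B⁻¹ * Rᵀ * B * (B * B⁻¹) := by rw [hB1, mul_one]
      _ = B⁻¹ * (Rᵀ * (B * B)) * B⁻¹ := by noncomm_ring
      _ = B⁻¹ * (B * B * R) * B⁻¹ := by rw [hcommB]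
      _ = (B⁻¹ * B) * (B * R * B⁻¹) := by noncomm_ring
      _ = B * R * B⁻¹ := by rw [hB2, one_mul]
  have hNherm : N.IsHermitian := by
    rw [Matrix.IsHermitian, conjTranspose_eq_transpose_of_trivial, hNs]
  have heig : ∀ a, hNherm.eigenvalues a * hNherm.eigenvalues a = 1 := by
    intro a
    set lam := hNherm.eigenvalues a with hlam
    set x : n → ℝ := ⇑(hNherm.eigenvectorBasis a) with hx
    have hmul : N *ᵥ x = lam • x := hNherm.mulVec_eigenvectorBasis a
    have hxnz : x ≠ 0 := by
      have h1 := hNherm.eigenvectorBasis.orthonormal.ne_zero a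
      intro h
      apply h1
      ext t
      exact congrFun h t
    set y : n → ℝ := B⁻¹ *ᵥ x with hy
    have hynz : y ≠ 0 := by
      intro h
      apply hxnz
      have : B *ᵥ y = x := by rw [hy, mulVec_mulVec, hB1, one_mulVec]
      rw [h, mulVec_zero] at this
      exact this.symm
    have hRy : R *ᵥ y = lam • y := by
      have e1 : B⁻¹ * N = R * B⁻¹ := by
        rw [hNdef, ← mul_assoc, ← mul_assoc, hB2, one_mul]
      calc R *ᵥ y = (R * B⁻¹) *ᵥ x := by rw [hy, mulVec_mulVec]
        _ = (B⁻¹ * N) *ᵥ x := by rw [e1]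
        _ = B⁻¹ *ᵥ (N *ᵥ x) := by rw [mulVec_mulVec]
        _ = B⁻¹ *ᵥ (lam • x) := by rw [hmul]
        _ = lam • y := by rw [mulVec_smul, hy]
    have hnormpres : (R *ᵥ y) ⬝ᵥ (R *ᵥ y) = y ⬝ᵥ y := by
      calc (R *ᵥ y) ⬝ᵥ (R *ᵥ y) = ((R *ᵥ y) ᵥ* R) ⬝ᵥ y := by rw [dotProduct_mulVec]
        _ = (Rᵀ *ᵥ (R *ᵥ y)) ⬝ᵥ y := by rw [← mulVec_transpose]
        _ = ((Rᵀ * R) *ᵥ y) ⬝ᵥ y := by rw [mulVec_mulVec]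
        _ = y ⬝ᵥ y := by rw [horth, one_mulVec]
    rw [hRy, smul_dotProduct, dotProduct_smul, smul_eq_mul, smul_eq_mul, ← mul_assoc] at hnormpres
    have hyy : y ⬝ᵥ y ≠ 0 := fun h => hynz (dotProduct_self_eq_zero.mp h)
    exact mul_right_cancel₀ hyy (hnormpres.trans (one_mul (y ⬝ᵥ y)).symm)
  have hU1 : (hNherm.eigenvectorUnitary : Matrix n n ℝ)
      * star (hNherm.eigenvectorUnitary : Matrix n n ℝ) = 1 :=
    (Matrix.mem_unitaryGroup_iff).mp hNherm.eigenvectorUnitary.2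
  have hU2 : star (hNherm.eigenvectorUnitary : Matrix n n ℝ)
      * (hNherm.eigenvectorUnitary : Matrix n n ℝ) = 1 :=
    (Matrix.mem_unitaryGroup_iff').mp hNherm.eigenvectorUnitary.2
  have hDD : diagonal (RCLike.ofReal ∘ hNherm.eigenvalues)
      * diagonal (RCLike.ofReal ∘ hNherm.eigenvalues) = (1 : Matrix n n ℝ) := by
    have e : (fun i => (RCLike.ofReal ∘ hNherm.eigenvalues) i
        * (RCLike.ofReal ∘ hNherm.eigenvalues) i) = fun _ => (1 : ℝ) := by
      funext a
      simpa using heig a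
    rw [diagonal_mul_diagonal, e]
    exact diagonal_one
  have hNN : N * N = 1 := by
    conv_lhs => rw [hNherm.spectral_theorem]
    set U := (hNherm.eigenvectorUnitary : Matrix n n ℝ)
    set D : Matrix n n ℝ := diagonal (RCLike.ofReal ∘ hNherm.eigenvalues)
    calc (U * D * star U) * (U * D * star U)
        = U * D * (star U * U) * D * star U := by noncomm_ring
      _ = U * (D * D) * star U := by rw [hU2, mul_one]; noncomm_ring
      _ = U * star U := by rw [hDD, mul_one]
      _ = 1 := hU1
  have e1 : B * (R * R) * B⁻¹ = 1 := by
    calc B * (R * R) * B⁻¹ = (B * R * B⁻¹) * (B * R * B⁻¹) := by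
          rw [mul_assoc (B * R) B⁻¹ (B * R * B⁻¹), ← mul_assoc B⁻¹ (B * R) B⁻¹,
            ← mul_assoc B⁻¹ B R, hB2, one_mul]
          noncomm_ring
      _ = 1 := hNN
  calc R * R = (B⁻¹ * B) * (R * R) * (B⁻¹ * B) := by rw [hB2, one_mul, mul_one]
    _ = B⁻¹ * (B * (R * R) * B⁻¹) * B := by noncomm_ring
    _ = B⁻¹ * 1 * B := by rw [e1]
    _ = 1 := by rw [mul_one, hB2]

set_option maxHeartbeats 2000000 in
/-- For symmetric positive definite `Q̄`, the set of `R ∈ SO(3)` with `ψ(Q̄R) = 0`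
equals `{I₃} ∪ {R_a(π,v) : v a unit eigenvector of Q̄}`. -/
theorem stmt8 (Qb : Matrix (Fin 3) (Fin 3) ℝ) (hsym : Qbᵀ = Qb) (hpd : Qb.PosDef) :
    {R : Matrix (Fin 3) (Fin 3) ℝ | Rᵀ * R = 1 ∧ R.det = 1 ∧ psi (Qb * R) = 0}
      = {1} ∪ {R | ∃ v : Fin 3 → ℝ, v ⬝ᵥ v = 1 ∧ (∃ μ : ℝ, Qb *ᵥ v = μ • v) ∧
          R = Ra Real.pi v} := by
  have hq : ∀ a b, Qb a b = Qb b a := fun a b => by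
    conv_lhs => rw [← hsym]
    rfl
  ext R
  simp only [Set.mem_setOf_eq, Set.mem_union, Set.mem_singleton_iff]
  constructor
  · rintro ⟨horth, hdet, hpsi⟩
    have p0 := congrFun hpsi 0
    have p1 := congrFun hpsi 1
    have p2 := congrFun hpsi 2
    simp [psi] at p0 p1 p2
    have e21 : (Qb * R) 2 1 = (Qb * R) 1 2 := by linarith
    have e02 : (Qb * R) 0 2 = (Qb * R) 2 0 := by linarith
    have e10 : (Qb * R) 1 0 = (Qb * R) 0 1 := by linarith
    have hS : (Qb * R)ᵀ = Qb * R := by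
      ext a b
      rw [transpose_apply]
      fin_cases a <;> fin_cases b <;>
        first
          | rfl
          | exact e21
          | exact e21.symm
          | exact e02
          | exact e02.symm
          | exact e10
          | exact e10.symm
    have hQR : Rᵀ * Qb = Qb * R := by
      calc Rᵀ * Qb = Rᵀ * Qbᵀ := by rw [hsym]
        _ = (Qb * R)ᵀ := by rw [transpose_mul]
        _ = Qb * R := hS
    have hR2 : R * R = 1 := sq_eq_one_aux Qb R hpd horth hQR
    have hRs : Rᵀ = R := by
      calc Rᵀ = Rᵀ * (R * R) := by rw [hR2, mul_one]
        _ = (Rᵀ * R) * R := by rw [mul_assoc]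
        _ = R := by rw [horth, one_mul]
    rcases symm_orth_class R hRs hR2 hdet with h1 | ⟨v, hv, hRjk⟩
    · exact Or.inl h1
    · right
      have hv' : v 0 * v 0 + v 1 * v 1 + v 2 * v 2 = 1 := by
        simpa [dotProduct, Fin.sum_univ_three] using hv
      have hRw : ∀ (w : Fin 3 → ℝ) (j : Fin 3), (R *ᵥ w) j = 2 * v j * (v ⬝ᵥ w) - w j := by
        intro w j
        fin_cases j <;>
          simp only [Matrix.mulVec, dotProduct, Fin.sum_univ_three, hRjk] <;>
          simp [Matrix.one_apply] <;> ring
      have hRv : R *ᵥ v = v := by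
        funext j
        rw [hRw v j]
        have : v ⬝ᵥ v = 1 := hv
        rw [this]; ring
      have hcomm2 : R * Qb = Qb * R := by rwa [hRs] at hQR
      set x := Qb *ᵥ v with hx
      have hRx : R *ᵥ x = x := by
        rw [hx, mulVec_mulVec, hcomm2, ← mulVec_mulVec, hRv]
      refine ⟨v, hv, ⟨v ⬝ᵥ x, ?_⟩, ?_⟩
      · funext j
        have h1 := congrFun hRx j
        rw [hRw x j] at h1
        have : ((v ⬝ᵥ x) • v) j = (v ⬝ᵥ x) * v j := rfl
        rw [← hx, this]
        linear_combination (-1/2 : ℝ) * h1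
      · ext j k
        rw [Ra_pi_apply v hv' j k]
        exact hRjk j k
  · rintro (rfl | ⟨v, hv, ⟨μ, hev⟩, rfl⟩)
    · refine ⟨by simp, by simp, ?_⟩
      funext c
      rw [mul_one]
      fin_cases c <;> simp [psi] <;>
        first
          | linear_combination hq 2 1
          | linear_combination hq 0 2
          | linear_combination hq 1 0
    · have hv' : v 0 * v 0 + v 1 * v 1 + v 2 * v 2 = 1 := by
        simpa [dotProduct, Fin.sum_univ_three] using hv
      have hM := Ra_pi_apply v hv'
      have hev' : ∀ j : Fin 3, Qb j 0 * v 0 + Qb j 1 * v 1 + Qb j 2 * v 2 = μ * v j := by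
        intro j
        have := congrFun hev j
        simpa [Matrix.mulVec, dotProduct, Fin.sum_univ_three] using this
      refine ⟨?_, ?_, ?_⟩
      · ext a b
        rw [Matrix.mul_apply, Fin.sum_univ_three]
        simp only [transpose_apply, hM]
        fin_cases a <;> fin_cases b <;> simp [Matrix.one_apply] <;>
          first
            | linear_combination (4 * v 0 * v 0 : ℝ) * hv'
            | linear_combination (4 * v 0 * v 1 : ℝ) * hv'
            | linear_combination (4 * v 0 * v 2 : ℝ) * hv'
            | linear_combination (4 * v 1 * v 1 : ℝ) * hv'
            | linear_combination (4 * v 1 * v 2 : ℝ) * hv'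
            | linear_combination (4 * v 2 * v 2 : ℝ) * hv'
      · rw [det_fin_three]
        simp only [hM]
        simp [Matrix.one_apply]
        linear_combination (2 : ℝ) * hv'
      · funext c
        have hQM : ∀ a b : Fin 3, (Qb * Ra Real.pi v) a b
            = Qb a 0 * (Ra Real.pi v) 0 b + Qb a 1 * (Ra Real.pi v) 1 b
              + Qb a 2 * (Ra Real.pi v) 2 b := by
          intro a b
          rw [Matrix.mul_apply, Fin.sum_univ_three]
        fin_cases c <;>
          simp only [psi, hQM, hM, Matrix.cons_val_zero, Matrix.cons_val_one, Matrix.head_cons,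
            Pi.zero_apply] <;>
          simp [Matrix.one_apply] <;>
          first
            | linear_combination (2 * v 1 : ℝ) * hev' 2 - (2 * v 2 : ℝ) * hev' 1 + hq 1 2
            | linear_combination (2 * v 2 : ℝ) * hev' 0 - (2 * v 0 : ℝ) * hev' 2 + hq 2 0
            | linear_combination (2 * v 0 : ℝ) * hev' 1 - (2 * v 1 : ℝ) * hev' 0 + hq 0 1
end
end
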